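/- arXiv:math/0605411 — 5 statements merged into one kernel-verified Lean document; each statement's English description precedes it below -/
import Mathlib

section
/- Every function in the clone C which takes a value in A is a projection; equivalently, if f ∈ C is not a projection, then the range of f is disjoint from A. -/
universe u v

/-- A clone on `X`: a set of finitary operations (of each arity `n + 1 ≥ 1`)
containing all projections and closed under composition. -/
structure Clone (X : Type u) where
  carrier : ∀ n : ℕ, Set ((Fin (n + 1) → X) → X)
  proj_mem : ∀ (n : ℕ) (i : Fin (n + 1)), (fun x => x i) ∈ carrier n
  comp_mem : ∀ {m n : ℕ} (f : (Fin (m + 1) → X) → X)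
      (g : Fin (m + 1) → (Fin (n + 1) → X) → X),
      f ∈ carrier m → (∀ i, g i ∈ carrier n) →
      (fun x => f fun i => g i x) ∈ carrier n

namespace Clone

variable {X : Type u}

theorem carrier_injective : Function.Injective (Clone.carrier (X := X)) := by
  rintro ⟨c, _, _⟩ ⟨d, _, _⟩ h
  simpa using h

instance : PartialOrder (Clone X) where
  le C D := ∀ n, C.carrier n ⊆ D.carrier n
  le_refl _ _ := subset_rfl
  le_trans _ _ _ h₁ h₂ n := (h₁ n).trans (h₂ n)
  le_antisymm _ _ h₁ h₂ :=
    carrier_injective (funext fun n => subset_antisymm (h₁ n) (h₂ n))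

instance : InfSet (Clone X) where
  sInf S :=
    { carrier := fun n => ⋂ C ∈ S, C.carrier n
      proj_mem := fun n i => Set.mem_iInter₂.2 fun C _ => C.proj_mem n i
      comp_mem := fun f g hf hg => Set.mem_iInter₂.2 fun C hC =>
        C.comp_mem f g (Set.mem_iInter₂.1 hf C hC)
          fun i => Set.mem_iInter₂.1 (hg i) C hC }

/-- The lattice `Cl(X)` of all clones on `X` is a complete lattice
(with infima given by intersection). -/
instance : CompleteLattice (Clone X) :=
  completeLatticeOfInf (Clone X) (fun S =>
    ⟨fun C hC n _ hx => Set.mem_iInter₂.1 hx C hC,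
     fun _ hD n _ hx => Set.mem_iInter₂.2 fun C hC => hD hC n hx⟩)

/-- The clone generated by a family `F` of operations:
the smallest clone whose carrier contains `F`. -/
def cloneGen (F : ∀ n : ℕ, Set ((Fin (n + 1) → X) → X)) : Clone X :=
  sInf {C : Clone X | ∀ n, F n ⊆ C.carrier n}

end Clone

attribute [local instance] Classical.propDecidable

noncomputable section Construction

variable {X : Type u} {P : Type v} [SemilatticeSup P]
variable (e0 e1 e2 e4 : X) (Af : P → Set X)

/-- `A = X ∖ {0, 1, 2, 4}`. -/
def Aset : Set X := ({e0, e1, e2, e4} : Set X)ᶜ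

/-- The unary function `φ_p`: the characteristic function of `A_p` on `A`,
fixing `2` and sending `{0, 1, 4}` to `4`. -/
def phi (p : P) (x : X) : X :=
  if x ∈ Af p then e1
  else if x ∈ Aset e0 e1 e2 e4 then e0
  else if x = e2 then e2
  else e4

/-- The ternary function `m_p^{q₁,q₂}`. -/
def mOp (p q1 q2 : P) (x y z : X) : X :=
  if y = phi e0 e1 e2 e4 Af q1 x ∧ z = phi e0 e1 e2 e4 Af q2 x then
    phi e0 e1 e2 e4 Af p x
  else if (x = e2 ∨ y = e2 ∨ z = e2) ∧ y ≠ e1 ∧ y ≠ e4 ∧ z ≠ e1 ∧ z ≠ e4 then e2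
  else e4

/-- `φ_p` as a unary operation (member of arity-1 part of a clone). -/
def phi1 (p : P) : (Fin 1 → X) → X := fun x => phi e0 e1 e2 e4 Af p (x 0)

/-- `m_p^{q₁,q₂}` as a ternary operation. -/
def m3 (p q1 q2 : P) : (Fin 3 → X) → X :=
  fun x => mOp e0 e1 e2 e4 Af p q1 q2 (x 0) (x 1) (x 2)

/-- The family `Φ_Q = {φ_p : p ∈ Q}`, as a family of operations indexed by arity. -/
def PhiFam (Q : Set P) : ∀ n : ℕ, Set ((Fin (n + 1) → X) → X)
  | 0 => {f | ∃ p ∈ Q, f = phi1 e0 e1 e2 e4 Af p}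
  | _ + 1 => ∅

/-- The family `M = {m_p^{q₁,q₂} : p ≤ q₁ ∨ q₂}`, as a family of operations indexed by arity. -/
def MFam : ∀ n : ℕ, Set ((Fin (n + 1) → X) → X)
  | 2 => {f | ∃ p q1 q2 : P, p ≤ q1 ⊔ q2 ∧ f = m3 e0 e1 e2 e4 Af p q1 q2}
  | _ => ∅

/-- The clone `C = ⟨Φ ∪ M⟩`. -/
def CClone : Clone X :=
  Clone.cloneGen fun n => PhiFam e0 e1 e2 e4 Af Set.univ n ∪ MFam e0 e1 e2 e4 Af n

/-- A function depends on its `i`-th variable iff it takes different values on two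
tuples differing only in the `i`-th coordinate. -/
def DependsOnVar {n : ℕ} (t : (Fin n → X) → X) (i : Fin n) : Prop :=
  ∃ a b : Fin n → X, (∀ j, j ≠ i → a j = b j) ∧ t a ≠ t b

/-- A unary function is distracted iff it takes a value in `{2, 4}` somewhere on `A`. -/
def Distracted (f : X → X) : Prop :=
  ∃ a ∈ Aset e0 e1 e2 e4, f a = e2 ∨ f a = e4

/-- The unary function `X → X` corresponding to a unary operation. -/
def toFun1 (u : (Fin 1 → X) → X) : X → X := fun a => u fun _ => a

/-- An `n`-ary member of `C` is unspoilt iff some substitution of unary members of `C`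
into it yields an element of `Φ`. -/
def Unspoilt {n : ℕ} (t : (Fin (n + 1) → X) → X) : Prop :=
  ∃ ts : Fin (n + 1) → (Fin 1 → X) → X,
    (∀ i, ts i ∈ (CClone e0 e1 e2 e4 Af).carrier 0) ∧
    (fun x : Fin 1 → X => t fun i => ts i x) ∈ PhiFam e0 e1 e2 e4 Af Set.univ 0

/-- The family `S` of all spoilt members of `C`. -/
def SpoiltFam (n : ℕ) : Set ((Fin (n + 1) → X) → X) :=
  {t | t ∈ (CClone e0 e1 e2 e4 Af).carrier n ∧ ¬ Unspoilt e0 e1 e2 e4 Af t}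

/-- The clone `C_I = ⟨Φ_I ∪ M ∪ S⟩`. -/
def CI (I : Set P) : Clone X :=
  Clone.cloneGen fun n =>
    PhiFam e0 e1 e2 e4 Af I n ∪ MFam e0 e1 e2 e4 Af n ∪ SpoiltFam e0 e1 e2 e4 Af n

end Construction

/-- An ideal of a join-semilattice: a downward closed subset closed under finite joins. -/
def IsIdealP {P : Type v} [SemilatticeSup P] (I : Set P) : Prop :=
  (∀ p q : P, p ≤ q → q ∈ I → p ∈ I) ∧ ∀ p q : P, p ∈ I → q ∈ I → p ⊔ q ∈ I

/-- The ideal of `P` generated by a subset `I`. -/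
def idealGen {P : Type v} [SemilatticeSup P] (I : Set P) : Set P :=
  ⋂₀ {J : Set P | IsIdealP J ∧ I ⊆ J}

/-- Auxiliary clone: operations that are projections or whose range avoids `A`. -/
def ProjOrAvoid {X : Type u} (e0 e1 e2 e4 : X) : Clone X where
  carrier n := {t | (∃ i, t = fun x => x i) ∨ ∀ x, t x ∉ Aset e0 e1 e2 e4}
  proj_mem n i := Or.inl ⟨i, rfl⟩
  comp_mem := by
    intro m n f g hf hg
    rcases hf with ⟨i, rfl⟩ | hf
    · rcases hg i with ⟨j, hj⟩ | h
      · exact Or.inl ⟨j, by simp [hj]⟩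
      · exact Or.inr h
    · exact Or.inr fun x => hf _

theorem phi_not_mem_A {X : Type u} {P : Type v} [SemilatticeSup P]
    (e0 e1 e2 e4 : X) (Af : P → Set X) (p : P) (x : X) :
    phi e0 e1 e2 e4 Af p x ∉ Aset e0 e1 e2 e4 := by
  unfold phi
  split_ifs <;> simp [Aset]

theorem mOp_not_mem_A {X : Type u} {P : Type v} [SemilatticeSup P]
    (e0 e1 e2 e4 : X) (Af : P → Set X) (p q1 q2 : P) (x y z : X) :
    mOp e0 e1 e2 e4 Af p q1 q2 x y z ∉ Aset e0 e1 e2 e4 := by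
  unfold mOp
  split_ifs
  · exact phi_not_mem_A e0 e1 e2 e4 Af p x
  · simp [Aset]
  · simp [Aset]

/-- Lemma 1: the only functions in `C` which take values in `A` are the projections. -/
theorem only_projections_take_values_in_A
    {X : Type u} {P : Type v} [Infinite X] [SemilatticeSup P]
    (e0 e1 e2 e4 : X)
    (hdist : e0 ≠ e1 ∧ e0 ≠ e2 ∧ e0 ≠ e4 ∧ e1 ≠ e2 ∧ e1 ≠ e4 ∧ e2 ≠ e4)
    (hcard : Cardinal.lift.{u} (Cardinal.mk P) ≤ Cardinal.lift.{v} (2 ^ Cardinal.mk X))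
    (Af : P → Set X) (hAf : ∀ p : P, Af p ⊆ Aset e0 e1 e2 e4)
    (hcover : ∀ (p : P) (k : ℕ) (q : Fin k → P),
      (∀ i, p ≠ q i) → ¬ Af p ⊆ ⋃ i, Af (q i))
    (n : ℕ) (t : (Fin (n + 1) → X) → X)
    (ht : t ∈ (CClone e0 e1 e2 e4 Af).carrier n)
    (hval : ∃ x : Fin (n + 1) → X, t x ∈ Aset e0 e1 e2 e4) :
    ∃ i : Fin (n + 1), t = fun x => x i := by
  have hmem : ProjOrAvoid e0 e1 e2 e4 ∈
      {C : Clone X | ∀ k, (PhiFam e0 e1 e2 e4 Af Set.univ k ∪ MFam e0 e1 e2 e4 Af k)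
        ⊆ C.carrier k} := by
    intro k f hf
    rcases hf with hf | hf
    · cases k with
      | zero =>
        obtain ⟨p, -, rfl⟩ := hf
        exact Or.inr fun x => phi_not_mem_A e0 e1 e2 e4 Af p (x 0)
      | succ k => exact absurd hf (by simp [PhiFam])
    · match k, f, hf with
      | 0, f, hf => exact absurd hf (by simp [MFam])
      | 1, f, hf => exact absurd hf (by simp [MFam])
      | 2, _, ⟨p, q1, q2, _, rfl⟩ =>
        exact Or.inr fun x => mOp_not_mem_A e0 e1 e2 e4 Af p q1 q2 (x 0) (x 1) (x 2)
      | (k + 3), f, hf => exact absurd hf (by simp [MFam])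
  have hle : CClone e0 e1 e2 e4 Af ≤ ProjOrAvoid e0 e1 e2 e4 := sInf_le hmem
  rcases hle n ht with h | h
  · exact h
  · obtain ⟨x, hx⟩ := hval
    exact absurd hx (h x)
end

section
/- Let t ∈ C be n-ary and let t_1, …, t_n be unary operations on X. If t depends on its i-th variable (1 ≤ i ≤ n) and t_i is distracted, then the unary function t(t_1, …, t_n) is distracted. -/
universe u v

attribute [local instance] Classical.propDecidable

section GoodClone

attribute [local instance] Classical.propDecidable

variable {X : Type u}

/-- Hybrid argument: if `f` differs on `u` and `v`, there is a coordinate `j`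
where `u j ≠ v j` and `f` depends on `j`. -/
lemma exists_dep_of_ne {m : ℕ} (f : (Fin (m + 1) → X) → X) (v : Fin (m + 1) → X) :
    ∀ (s : Finset (Fin (m + 1))) (u : Fin (m + 1) → X), (∀ j ∉ s, u j = v j) → f u ≠ f v →
      ∃ j ∈ s, u j ≠ v j ∧ DependsOnVar f j := by
  intro s
  induction s using Finset.induction_on with
  | empty =>
    intro u h hne
    exact absurd (congrArg f (funext fun j => h j (Finset.notMem_empty j))) hne
  | @insert j s hj ih =>
    intro u hout hne
    by_cases hfu : f u = f (Function.update u j (v j))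
    · obtain ⟨k, hk, hkv, hdep⟩ := ih (Function.update u j (v j))
        (fun k hk => by
          by_cases hkj : k = j
          · subst hkj; simp
          · rw [Function.update_of_ne hkj]
            exact hout k (by simp [hkj, hk]))
        (by rw [← hfu]; exact hne)
      have hkj : k ≠ j := by rintro rfl; exact hj hk
      refine ⟨k, Finset.mem_insert_of_mem hk, ?_, hdep⟩
      rwa [Function.update_of_ne hkj] at hkv
    · have hujv : u j ≠ v j := by
        intro h; apply hfu; rw [← h, Function.update_eq_self]
      exact ⟨j, Finset.mem_insert_self j s, hujv,
        u, Function.update u j (v j),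
        fun k hk => (Function.update_of_ne hk _ _).symm, hfu⟩

/-- The invariant: whenever `t` depends on its `i`-th variable and the `i`-th
coordinate of the input is `e2` or `e4`, the output is `e2` or `e4`. -/
def IsGood (e2 e4 : X) {n : ℕ} (t : (Fin (n + 1) → X) → X) : Prop :=
  ∀ (i : Fin (n + 1)) (x : Fin (n + 1) → X), DependsOnVar t i →
    (x i = e2 ∨ x i = e4) → (t x = e2 ∨ t x = e4)

/-- The functions satisfying the invariant form a clone. -/
def GoodClone (e2 e4 : X) : Clone X where
  carrier n := {t | IsGood e2 e4 t}
  proj_mem n i := by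
    intro j x hdep hx
    obtain ⟨a, b, hab, hne⟩ := hdep
    by_cases hij : i = j
    · subst hij; exact hx
    · exact absurd (hab i hij) hne
  comp_mem := by
    intro m n f g hf hg i x hdep hx
    obtain ⟨a, b, hab, hne⟩ := hdep
    obtain ⟨j, -, hjne, hjdep⟩ := exists_dep_of_ne f (fun k => g k b) Finset.univ
      (fun k => g k a) (fun k hk => absurd (Finset.mem_univ k) hk) hne
    have hgj : g j x = e2 ∨ g j x = e4 := hg j i x ⟨a, b, hab, hjne⟩ hx
    exact hf j (fun k => g k x) hjdep hgj

end GoodClone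

/-- Lemma 2: substituting a distracted unary function for a variable on which a member
of `C` depends yields a distracted function. -/
theorem insert_distracted
    {X : Type u} {P : Type v} [Infinite X] [SemilatticeSup P]
    (e0 e1 e2 e4 : X)
    (hdist : e0 ≠ e1 ∧ e0 ≠ e2 ∧ e0 ≠ e4 ∧ e1 ≠ e2 ∧ e1 ≠ e4 ∧ e2 ≠ e4)
    (hcard : Cardinal.lift.{u} (Cardinal.mk P) ≤ Cardinal.lift.{v} (2 ^ Cardinal.mk X))
    (Af : P → Set X) (hAf : ∀ p : P, Af p ⊆ Aset e0 e1 e2 e4)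
    (hcover : ∀ (p : P) (k : ℕ) (q : Fin k → P),
      (∀ i, p ≠ q i) → ¬ Af p ⊆ ⋃ i, Af (q i))
    (n : ℕ) (t : (Fin (n + 1) → X) → X)
    (ht : t ∈ (CClone e0 e1 e2 e4 Af).carrier n)
    (ts : Fin (n + 1) → X → X) (i : Fin (n + 1))
    (hdep : DependsOnVar t i) (hdistr : Distracted e0 e1 e2 e4 (ts i)) :
    Distracted e0 e1 e2 e4 (fun a => t fun j => ts j a) := by
  obtain ⟨h01, h02, h04, h12, h14, h24⟩ := hdist
  obtain ⟨a, ha, hva⟩ := hdistr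
  have hA2 : e2 ∉ Aset e0 e1 e2 e4 := by simp [Aset]
  have hA4 : e4 ∉ Aset e0 e1 e2 e4 := by simp [Aset]
  have hphi2 : ∀ p, phi e0 e1 e2 e4 Af p e2 = e2 := fun p => by
    unfold phi
    rw [if_neg (fun h => hA2 (hAf p h)), if_neg hA2, if_pos rfl]
  have hphi4 : ∀ p, phi e0 e1 e2 e4 Af p e4 = e4 := fun p => by
    unfold phi
    rw [if_neg (fun h => hA4 (hAf p h)), if_neg hA4, if_neg (Ne.symm h24)]
  have hphiS : ∀ p x, (x = e2 ∨ x = e4) →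
      (phi e0 e1 e2 e4 Af p x = e2 ∨ phi e0 e1 e2 e4 Af p x = e4) := by
    rintro p x (rfl | rfl)
    · exact Or.inl (hphi2 p)
    · exact Or.inr (hphi4 p)
  have hphi_e2 : ∀ p x, phi e0 e1 e2 e4 Af p x = e2 → x = e2 := by
    intro p x h
    unfold phi at h
    split_ifs at h with h1 h2 h3
    · exact absurd h h12
    · exact absurd h h02
    · exact h3
    · exact absurd h (Ne.symm h24)
  have hphi_e4 : ∀ p x, phi e0 e1 e2 e4 Af p x = e4 →
      x ∉ Aset e0 e1 e2 e4 ∧ x ≠ e2 := by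
    intro p x h
    unfold phi at h
    split_ifs at h with h1 h2 h3
    · exact absurd h h14
    · exact absurd h h04
    · exact absurd h h24
    · exact ⟨h2, h3⟩
  have hphi_out : ∀ p x, x ∉ Aset e0 e1 e2 e4 → x ≠ e2 →
      phi e0 e1 e2 e4 Af p x = e4 := by
    intro p x hxA hx2
    unfold phi
    rw [if_neg (fun h => hxA (hAf p h)), if_neg hxA, if_neg hx2]
  have hle : CClone e0 e1 e2 e4 Af ≤ GoodClone e2 e4 := by
    apply sInf_le
    intro k
    match k with
    | 0 =>
      rintro f (⟨p, -, rfl⟩ | hf)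
      · intro j x _ hx
        exact hphiS p (x 0) (Fin.fin_one_eq_zero j ▸ hx)
      · exact absurd hf (by simp [MFam])
    | 1 =>
      rintro f (hf | hf)
      · exact absurd hf (by simp [PhiFam])
      · exact absurd hf (by simp [MFam])
    | 2 =>
      rintro f (hf | ⟨p, q1, q2, hpq, rfl⟩)
      · exact absurd hf (by simp [PhiFam])
      · intro j x _ hx
        show mOp e0 e1 e2 e4 Af p q1 q2 (x 0) (x 1) (x 2) = e2 ∨
            mOp e0 e1 e2 e4 Af p q1 q2 (x 0) (x 1) (x 2) = e4
        unfold mOp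
        split_ifs with h1 h2
        · obtain ⟨hb, hc⟩ := h1
          fin_cases j
          · exact hphiS p (x 0) hx
          · rcases hx with hx | hx
            · exact Or.inl ((hphi_e2 q1 (x 0) (hx ▸ hb.symm)) ▸ hphi2 p)
            · obtain ⟨hxa, hx2⟩ := hphi_e4 q1 (x 0) (hx ▸ hb.symm)
              exact Or.inr (hphi_out p (x 0) hxa hx2)
          · rcases hx with hx | hx
            · exact Or.inl ((hphi_e2 q2 (x 0) (hx ▸ hc.symm)) ▸ hphi2 p)
            · obtain ⟨hxa, hx2⟩ := hphi_e4 q2 (x 0) (hx ▸ hc.symm)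
              exact Or.inr (hphi_out p (x 0) hxa hx2)
        · exact Or.inl rfl
        · exact Or.inr rfl
    | (k + 3) =>
      rintro f (hf | hf)
      · exact absurd hf (by simp [PhiFam])
      · exact absurd hf (by simp [MFam])
  exact ⟨a, ha, hle n ht i (fun j => ts j a) hdep hva⟩
end

section
/- Let m_p^{q_1,q_2} ∈ M and let t_1, t_2, t_3 ∈ Φ ∪ {id}, where id is the identity function on X. Then the unary function f = m_p^{q_1,q_2}(t_1,t_2,t_3) is distracted unless t_1 = id, t_2 = φ_{q_1}, and t_3 = φ_{q_2}; and in the latter case f = φ_p. -/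
universe u v

attribute [local instance] Classical.propDecidable

set_option maxHeartbeats 1000000 in
/-- Lemma 3: for `t1, t2, t3 ∈ Φ ∪ {id}`, the composition `m_p^(q1,q2)(t1,t2,t3)` is
distracted unless `t1 = id`, `t2 = φ_(q1)` and `t3 = φ_(q2)`, in which case it equals `φ_p`. -/
theorem composition_with_m
    {X : Type u} {P : Type v} [Infinite X] [SemilatticeSup P]
    (e0 e1 e2 e4 : X)
    (hdist : e0 ≠ e1 ∧ e0 ≠ e2 ∧ e0 ≠ e4 ∧ e1 ≠ e2 ∧ e1 ≠ e4 ∧ e2 ≠ e4)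
    (hcard : Cardinal.lift.{u} (Cardinal.mk P) ≤ Cardinal.lift.{v} (2 ^ Cardinal.mk X))
    (Af : P → Set X) (hAf : ∀ p : P, Af p ⊆ Aset e0 e1 e2 e4)
    (hcover : ∀ (p : P) (k : ℕ) (q : Fin k → P),
      (∀ i, p ≠ q i) → ¬ Af p ⊆ ⋃ i, Af (q i))
    (p q1 q2 : P) (hpq : p ≤ q1 ⊔ q2)
    (t1 t2 t3 : X → X)
    (h1 : t1 = id ∨ ∃ r : P, t1 = phi e0 e1 e2 e4 Af r)
    (h2 : t2 = id ∨ ∃ r : P, t2 = phi e0 e1 e2 e4 Af r)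
    (h3 : t3 = id ∨ ∃ r : P, t3 = phi e0 e1 e2 e4 Af r)
    (f : X → X)
    (hf : f = fun x => mOp e0 e1 e2 e4 Af p q1 q2 (t1 x) (t2 x) (t3 x)) :
    (¬ (t1 = id ∧ t2 = phi e0 e1 e2 e4 Af q1 ∧ t3 = phi e0 e1 e2 e4 Af q2) →
      Distracted e0 e1 e2 e4 f) ∧
    ((t1 = id ∧ t2 = phi e0 e1 e2 e4 Af q1 ∧ t3 = phi e0 e1 e2 e4 Af q2) →
      f = phi e0 e1 e2 e4 Af p) := by
  obtain ⟨h01, h02, h04, h12, h14, h24⟩ := hdist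
  have hne : ∀ r : P, (Af r).Nonempty := by
    intro r
    rcases Set.eq_empty_or_nonempty (Af r) with h | h
    · exact absurd (by rw [h]; exact Set.empty_subset _)
        (hcover r 0 (fun i => i.elim0) (fun i => i.elim0))
    · exact h
  constructor
  · intro hne3
    by_contra hnd
    apply hne3
    unfold Distracted at hnd
    have hkey : ∀ a ∈ Aset e0 e1 e2 e4, t1 a ∈ Aset e0 e1 e2 e4 ∧
        t2 a = phi e0 e1 e2 e4 Af q1 (t1 a) ∧ t3 a = phi e0 e1 e2 e4 Af q2 (t1 a) := by
      intro a ha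
      have hfa : ¬ (f a = e2 ∨ f a = e4) := fun h => hnd ⟨a, ha, h⟩
      simp only [hf] at hfa
      by_cases hc : t2 a = phi e0 e1 e2 e4 Af q1 (t1 a) ∧
          t3 a = phi e0 e1 e2 e4 Af q2 (t1 a)
      · refine ⟨?_, hc⟩
        by_contra hA1
        have h1' : t1 a ∉ Af p := fun h => hA1 (hAf p h)
        have heq : mOp e0 e1 e2 e4 Af p q1 q2 (t1 a) (t2 a) (t3 a)
            = phi e0 e1 e2 e4 Af p (t1 a) := by
          unfold mOp; rw [if_pos hc]
        rw [heq] at hfa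
        unfold phi at hfa
        rw [if_neg h1', if_neg hA1] at hfa
        split_ifs at hfa <;> simp at hfa
      · exfalso
        apply hfa
        unfold mOp
        rw [if_neg hc]
        split_ifs with h
        · exact Or.inl rfl
        · exact Or.inr rfl
    obtain ⟨a0, ha0⟩ := hne p
    have ha0A := hAf p ha0
    have ht1 : t1 = id := by
      rcases h1 with h | ⟨r, hr⟩
      · exact h
      · exfalso
        have hm := (hkey a0 ha0A).1
        rw [hr] at hm
        unfold phi at hm
        split_ifs at hm <;> simp [Aset] at hm
    subst ht1
    simp only [id_eq] at hkey
    refine ⟨rfl, ?_, ?_⟩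
    · rcases h2 with h | ⟨r, hr⟩
      · exfalso
        obtain ⟨b, hb⟩ := hne q1
        have hbA := hAf q1 hb
        have hm := (hkey b hbA).2.1
        rw [h, id_eq, phi, if_pos hb] at hm
        simp [Aset, hm] at hbA
      · subst hr
        by_cases hrq : r = q1
        · subst hrq; rfl
        · exfalso
          have hns := hcover r 1 (fun _ => q1) (fun _ => hrq)
          rw [Set.not_subset] at hns
          obtain ⟨c, hc, hc'⟩ := hns
          have hcq1 : c ∉ Af q1 := by simpa using hc'
          have hcA := hAf r hc
          have hm := (hkey c hcA).2.1
          rw [phi, if_pos hc, phi, if_neg hcq1, if_pos hcA] at hm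
          exact h01 hm.symm
    · rcases h3 with h | ⟨r, hr⟩
      · exfalso
        obtain ⟨b, hb⟩ := hne q2
        have hbA := hAf q2 hb
        have hm := (hkey b hbA).2.2
        rw [h, id_eq, phi, if_pos hb] at hm
        simp [Aset, hm] at hbA
      · subst hr
        by_cases hrq : r = q2
        · subst hrq; rfl
        · exfalso
          have hns := hcover r 1 (fun _ => q2) (fun _ => hrq)
          rw [Set.not_subset] at hns
          obtain ⟨c, hc, hc'⟩ := hns
          have hcq2 : c ∉ Af q2 := by simpa using hc'
          have hcA := hAf r hc
          have hm := (hkey c hcA).2.2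
          rw [phi, if_pos hc, phi, if_neg hcq2, if_pos hcA] at hm
          exact h01 hm.symm
  · rintro ⟨ht1, ht2, ht3⟩
    subst hf ht1 ht2 ht3
    funext x
    simp only [id_eq]
    unfold mOp
    rw [if_pos ⟨rfl, rfl⟩]
end

section
/- Every unary function t in the clone C other than the identity and the functions φ_p (p ∈ P) is distracted; that is, every t ∈ C^(1)∖(Φ ∪ {id}) is distracted. -/
universe u v

attribute [local instance] Classical.propDecidable

noncomputable section Construction

variable {X : Type u} {P : Type v} [SemilatticeSup P]
variable (e0 e1 e2 e4 : X) (Af : P → Set X)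

/-- A function depends on its `i`-th variable iff it takes different values on two
tuples differing only in the `i`-th coordinate. -/
def DependsOn' {n : ℕ} (t : (Fin n → X) → X) (i : Fin n) : Prop :=
  ∃ a b : Fin n → X, (∀ j, j ≠ i → a j = b j) ∧ t a ≠ t b

end Construction

noncomputable section Lemma4Aux

variable {X : Type u} {P : Type v} [SemilatticeSup P]
variable (e0 e1 e2 e4 : X) (Af : P → Set X)

/-- The set of "good" unary functions: identity, the φ's, and distracted functions. -/
def GoodU : Set (X → X) :=
  {g | g = id ∨ (∃ p : P, g = phi e0 e1 e2 e4 Af p) ∨ Distracted e0 e1 e2 e4 g}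

/-- The clone of operations that preserve goodness under unary substitution. -/
def DClone : Clone X where
  carrier n := {t | ∀ g : Fin (n + 1) → X → X,
      (∀ i, g i ∈ GoodU e0 e1 e2 e4 Af) →
      (fun a : X => t fun i => g i a) ∈ GoodU e0 e1 e2 e4 Af}
  proj_mem := fun n i g hg => hg i
  comp_mem := fun {m n} f gs hf hgs g hg =>
    hf (fun i a => gs i fun j => g j a) (fun i => hgs i g hg)

variable {e0 e1 e2 e4 Af}

lemma mem_Aset_iff {x : X} :
    x ∈ Aset e0 e1 e2 e4 ↔ x ≠ e0 ∧ x ≠ e1 ∧ x ≠ e2 ∧ x ≠ e4 := by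
  simp [Aset]

lemma Aset_nonempty [Infinite X] : ∃ a : X, a ∈ Aset e0 e1 e2 e4 :=
  (Set.toFinite {e0, e1, e2, e4}).infinite_compl.nonempty

lemma phi_of_mem {p : P} {x : X} (h : x ∈ Af p) :
    phi e0 e1 e2 e4 Af p x = e1 := if_pos h

lemma phi_of_A {p : P} {x : X} (hx : x ∈ Aset e0 e1 e2 e4) (h : x ∉ Af p) :
    phi e0 e1 e2 e4 Af p x = e0 := by
  simp [phi, h, hx]

lemma phi_A_val {p : P} {x : X} (hx : x ∈ Aset e0 e1 e2 e4) :
    phi e0 e1 e2 e4 Af p x = e0 ∨ phi e0 e1 e2 e4 Af p x = e1 := by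
  by_cases h : x ∈ Af p
  · exact Or.inr (phi_of_mem h)
  · exact Or.inl (phi_of_A hx h)

lemma phi_notA_val (hAf : ∀ p : P, Af p ⊆ Aset e0 e1 e2 e4) {p : P} {x : X}
    (hx : x ∉ Aset e0 e1 e2 e4) :
    phi e0 e1 e2 e4 Af p x = e2 ∨ phi e0 e1 e2 e4 Af p x = e4 := by
  have h1 : x ∉ Af p := fun h => hx (hAf p h)
  by_cases h2 : x = e2
  · subst h2; left; simp [phi, h1, hx]
  · right; simp [phi, h1, hx, h2]

/-- φ's are in the clone D. -/
lemma phi_mem_DClone [Infinite X]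
    (hdist : e0 ≠ e1 ∧ e0 ≠ e2 ∧ e0 ≠ e4 ∧ e1 ≠ e2 ∧ e1 ≠ e4 ∧ e2 ≠ e4)
    (hAf : ∀ p : P, Af p ⊆ Aset e0 e1 e2 e4) (p : P) :
    phi1 e0 e1 e2 e4 Af p ∈ (DClone e0 e1 e2 e4 Af).carrier 0 := by
  intro g hg
  have key : ∀ h : X → X, h ∈ GoodU e0 e1 e2 e4 Af →
      (fun a : X => phi e0 e1 e2 e4 Af p (h a)) ∈ GoodU e0 e1 e2 e4 Af := by
    intro h hh
    rcases hh with rfl | ⟨q, rfl⟩ | ⟨a, ha, hval⟩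
    · exact Or.inr (Or.inl ⟨p, rfl⟩)
    · -- φ_p ∘ φ_q is distracted
      obtain ⟨a, ha⟩ := Aset_nonempty (e0 := e0) (e1 := e1) (e2 := e2) (e4 := e4) (X := X)
      refine Or.inr (Or.inr ⟨a, ha, Or.inr ?_⟩)
      have hv := phi_A_val (Af := Af) (p := q) ha
      have hne : ∀ y, (y = e0 ∨ y = e1) → phi e0 e1 e2 e4 Af p y = e4 := by
        have he0 : phi e0 e1 e2 e4 Af p e0 = e4 := by
          have h1 : e0 ∉ Af p := fun h => (mem_Aset_iff.1 (hAf p h)).1 rfl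
          have h2 : e0 ∉ Aset e0 e1 e2 e4 := by simp [mem_Aset_iff]
          simp [phi, h1, h2, hdist.2.1]
        have he1 : phi e0 e1 e2 e4 Af p e1 = e4 := by
          have h1 : e1 ∉ Af p := fun h => (mem_Aset_iff.1 (hAf p h)).2.1 rfl
          have h2 : e1 ∉ Aset e0 e1 e2 e4 := by simp [mem_Aset_iff]
          simp [phi, h1, h2, hdist.2.2.2.1]
        rintro y (rfl | rfl) <;> assumption
      exact hne _ hv
    · -- φ_p ∘ distracted is distracted
      refine Or.inr (Or.inr ⟨a, ha, ?_⟩)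
      rcases hval with h2 | h4
      · left
        have : e2 ∉ Af p := fun h =>
          (mem_Aset_iff.1 (hAf p h)).2.2.1 rfl
        have h2' : e2 ∉ Aset e0 e1 e2 e4 := by simp [mem_Aset_iff]
        show phi e0 e1 e2 e4 Af p (h a) = e2
        rw [h2]; simp [phi, this, h2']
      · right
        have : e4 ∉ Af p := fun h =>
          (mem_Aset_iff.1 (hAf p h)).2.2.2 rfl
        have h4' : e4 ∉ Aset e0 e1 e2 e4 := by simp [mem_Aset_iff]
        have h42 : e4 ≠ e2 := fun h => hdist.2.2.2.2.2 h.symm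
        show phi e0 e1 e2 e4 Af p (h a) = e4
        rw [h4]; simp [phi, this, h4', h42]
  exact key (g 0) (hg 0)

/-- the m's are in the clone D. -/
lemma m_mem_DClone [Infinite X]
    (hdist : e0 ≠ e1 ∧ e0 ≠ e2 ∧ e0 ≠ e4 ∧ e1 ≠ e2 ∧ e1 ≠ e4 ∧ e2 ≠ e4)
    (hAf : ∀ p : P, Af p ⊆ Aset e0 e1 e2 e4)
    (hcover : ∀ (p : P) (k : ℕ) (q : Fin k → P),
      (∀ i, p ≠ q i) → ¬ Af p ⊆ ⋃ i, Af (q i))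
    (p q1 q2 : P) :
    m3 e0 e1 e2 e4 Af p q1 q2 ∈ (DClone e0 e1 e2 e4 Af).carrier 2 := by
  obtain ⟨ne01, ne02, ne04, ne12, ne14, ne24⟩ := hdist
  intro g hg
  set h : X → X := fun a =>
    mOp e0 e1 e2 e4 Af p q1 q2 (g 0 a) (g 1 a) (g 2 a) with hh
  show h ∈ GoodU e0 e1 e2 e4 Af
  by_cases hd : Distracted e0 e1 e2 e4 h
  · exact Or.inr (Or.inr hd)
  simp only [Distracted, not_exists] at hd
  -- From non-distraction: for each a ∈ A the first branch of mOp must fire with g 0 a ∈ A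
  have step1 : ∀ a ∈ Aset e0 e1 e2 e4,
      g 1 a = phi e0 e1 e2 e4 Af q1 (g 0 a) ∧
      g 2 a = phi e0 e1 e2 e4 Af q2 (g 0 a) ∧ g 0 a ∈ Aset e0 e1 e2 e4 := by
    intro a ha
    have hda := hd a
    have hna : ¬ (h a = e2 ∨ h a = e4) := by
      intro hcon; exact hda ⟨ha, hcon⟩
    push_neg at hna
    by_cases hbr : g 1 a = phi e0 e1 e2 e4 Af q1 (g 0 a) ∧
        g 2 a = phi e0 e1 e2 e4 Af q2 (g 0 a)
    · refine ⟨hbr.1, hbr.2, ?_⟩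
      by_contra hxA
      have : h a = phi e0 e1 e2 e4 Af p (g 0 a) := by
        simp only [hh, mOp, if_pos hbr]
      rcases phi_notA_val hAf (p := p) hxA with h2 | h4
      · exact hna.1 (this.trans h2)
      · exact hna.2 (this.trans h4)
    · exfalso
      have : h a = e2 ∨ h a = e4 := by
        simp only [hh, mOp, if_neg hbr]
        by_cases hbr2 : (g 0 a = e2 ∨ g 1 a = e2 ∨ g 2 a = e2) ∧
            g 1 a ≠ e1 ∧ g 1 a ≠ e4 ∧ g 2 a ≠ e1 ∧ g 2 a ≠ e4
        · left; exact if_pos hbr2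
        · right; exact if_neg hbr2
      rcases this with h' | h'
      · exact hna.1 h'
      · exact hna.2 h'
  obtain ⟨a0, ha0⟩ := Aset_nonempty (e0 := e0) (e1 := e1) (e2 := e2) (e4 := e4) (X := X)
  -- g 0 must be the identity
  have hg0 : g 0 = id := by
    rcases hg 0 with h' | ⟨r, hr⟩ | ⟨a, ha, hval⟩
    · exact h'
    · exfalso
      have := (step1 a0 ha0).2.2
      rw [hr] at this
      rcases phi_A_val (p := r) ha0 with hv | hv <;> rw [hv] at this <;>
        exact absurd this (by simp [mem_Aset_iff])
    · exfalso
      have := (step1 a ha).2.2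
      rcases hval with hv | hv <;> rw [hv] at this <;>
        exact absurd this (by simp [mem_Aset_iff])
  have hgA : ∀ a ∈ Aset e0 e1 e2 e4,
      g 1 a = phi e0 e1 e2 e4 Af q1 a ∧ g 2 a = phi e0 e1 e2 e4 Af q2 a := by
    intro a ha
    have := step1 a ha
    rw [hg0] at this
    exact ⟨this.1, this.2.1⟩
  -- g 1 must equal φ_{q1} and g 2 must equal φ_{q2}
  have keyg : ∀ (j : Fin 3) (q : P),
      (∀ a ∈ Aset e0 e1 e2 e4, g j a = phi e0 e1 e2 e4 Af q a) →
      g j = phi e0 e1 e2 e4 Af q := by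
    intro j q hjq
    rcases hg j with h' | ⟨r, hr⟩ | ⟨a, ha, hval⟩
    · exfalso
      have := hjq a0 ha0
      rw [h'] at this
      simp only [id] at this
      rcases phi_A_val (p := q) ha0 with hv | hv <;> rw [hv] at this <;>
        exact absurd ha0 (by simp [mem_Aset_iff, this])
    · -- g j = φ_r with φ_r = φ_q on A ⇒ r = q
      by_cases hrq : r = q
      · rw [hr, hrq]
      · exfalso
        have := hcover r 1 (fun _ => q) (fun _ => hrq)
        rw [Set.not_subset] at this
        obtain ⟨a, haR, haQ⟩ := this
        simp only [Set.mem_iUnion] at haQ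
        have haQ' : a ∉ Af q := fun hc => haQ ⟨0, hc⟩
        have haA : a ∈ Aset e0 e1 e2 e4 := hAf r haR
        have := hjq a haA
        rw [hr, phi_of_mem haR, phi_of_A haA haQ'] at this
        exact ne01 this.symm
    · exfalso
      have := hjq a ha
      rcases phi_A_val (p := q) ha with hv | hv <;> rw [hv] at this <;>
        rcases hval with hw | hw <;> rw [hw] at this
      · exact ne02 this.symm
      · exact ne04 this.symm
      · exact ne12 this.symm
      · exact ne14 this.symm
  have hg1 : g 1 = phi e0 e1 e2 e4 Af q1 := keyg 1 q1 fun a ha => (hgA a ha).1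
  have hg2 : g 2 = phi e0 e1 e2 e4 Af q2 := keyg 2 q2 fun a ha => (hgA a ha).2
  -- then h = φ_p
  refine Or.inr (Or.inl ⟨p, funext fun a => ?_⟩)
  simp only [hh, hg0, hg1, hg2, id]
  exact if_pos ⟨rfl, rfl⟩

/-- `C ≤ D`. -/
lemma CClone_le_DClone [Infinite X]
    (hdist : e0 ≠ e1 ∧ e0 ≠ e2 ∧ e0 ≠ e4 ∧ e1 ≠ e2 ∧ e1 ≠ e4 ∧ e2 ≠ e4)
    (hAf : ∀ p : P, Af p ⊆ Aset e0 e1 e2 e4)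
    (hcover : ∀ (p : P) (k : ℕ) (q : Fin k → P),
      (∀ i, p ≠ q i) → ¬ Af p ⊆ ⋃ i, Af (q i)) :
    CClone e0 e1 e2 e4 Af ≤ DClone e0 e1 e2 e4 Af := by
  apply sInf_le
  intro n
  match n with
  | 0 =>
    rintro f (⟨p, -, rfl⟩ | hf)
    · exact phi_mem_DClone hdist hAf p
    · exact absurd hf (by simp [MFam])
  | 1 =>
    rintro f (hf | hf)
    · exact absurd hf (by simp [PhiFam])
    · exact absurd hf (by simp [MFam])
  | 2 =>
    rintro f (hf | ⟨p, q1, q2, -, rfl⟩)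
    · exact absurd hf (by simp [PhiFam])
    · exact m_mem_DClone hdist hAf hcover p q1 q2
  | (n + 3) =>
    rintro f (hf | hf)
    · exact absurd hf (by simp [PhiFam])
    · exact absurd hf (by simp [MFam])

end Lemma4Aux

/-- Lemma 4: every unary member of `C` other than the identity and the functions `φ_p`
is distracted. -/
theorem all_unary_distracted
    {X : Type u} {P : Type v} [Infinite X] [SemilatticeSup P]
    (e0 e1 e2 e4 : X)
    (hdist : e0 ≠ e1 ∧ e0 ≠ e2 ∧ e0 ≠ e4 ∧ e1 ≠ e2 ∧ e1 ≠ e4 ∧ e2 ≠ e4)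
    (hcard : Cardinal.lift.{u} (Cardinal.mk P) ≤ Cardinal.lift.{v} (2 ^ Cardinal.mk X))
    (Af : P → Set X) (hAf : ∀ p : P, Af p ⊆ Aset e0 e1 e2 e4)
    (hcover : ∀ (p : P) (k : ℕ) (q : Fin k → P),
      (∀ i, p ≠ q i) → ¬ Af p ⊆ ⋃ i, Af (q i))
    (t : (Fin 1 → X) → X) (ht : t ∈ (CClone e0 e1 e2 e4 Af).carrier 0)
    (hphi : ¬ ∃ p : P, t = phi1 e0 e1 e2 e4 Af p)
    (hid : t ≠ fun x => x 0) :
    Distracted e0 e1 e2 e4 (toFun1 t) := by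
  have hD := CClone_le_DClone hdist hAf hcover 0 ht
  have hid' : (id : X → X) ∈ GoodU e0 e1 e2 e4 Af := Or.inl rfl
  have hgood := hD (fun _ => id) (fun _ => hid')
  have heq : (fun a : X => t fun _ => id a) = toFun1 t := rfl
  rw [heq] at hgood
  have hext : ∀ x : Fin 1 → X, x = fun _ => x 0 := by
    intro x; funext j
    have : j = 0 := Subsingleton.elim j 0
    rw [this]
  rcases hgood with h' | ⟨p, hp⟩ | h'
  · exfalso
    apply hid
    funext x
    have : t x = toFun1 t (x 0) := by rw [hext x]; rfl
    rw [this, h']; rfl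
  · exfalso
    apply hphi
    refine ⟨p, funext fun x => ?_⟩
    have : t x = toFun1 t (x 0) := by rw [hext x]; rfl
    rw [this, hp]; rfl
  · exact h'
end

section
/- Let t ∈ C be n-ary and unspoilt, witnessed by unary t_1, …, t_n ∈ C with t(t_1, …, t_n) ∈ Φ. If t depends on its i-th variable (1 ≤ i ≤ n), then t_i ∈ Φ ∪ {id}. -/
universe u v

attribute [local instance] Classical.propDecidable

section Auxiliary

attribute [local instance] Classical.propDecidable

variable {X : Type u} {P : Type v} [SemilatticeSup P]
variable (e0 e1 e2 e4 : X) (Af : P → Set X)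

/-- Inductive description of the members of the clone generated by `Φ ∪ M`. -/
inductive GenOp : ∀ n : ℕ, ((Fin (n + 1) → X) → X) → Prop
  | proj (n : ℕ) (i : Fin (n + 1)) : GenOp n fun x => x i
  | phi (p : P) : GenOp 0 (phi1 e0 e1 e2 e4 Af p)
  | mgen (p q1 q2 : P) (h : p ≤ q1 ⊔ q2) : GenOp 2 (m3 e0 e1 e2 e4 Af p q1 q2)
  | comp {m n : ℕ} (f : (Fin (m + 1) → X) → X) (g : Fin (m + 1) → (Fin (n + 1) → X) → X)
      (hf : GenOp m f) (hg : ∀ i, GenOp n (g i)) : GenOp n fun x => f fun i => g i x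

/-- The term operations form a clone. -/
def GenClone : Clone X where
  carrier n := {f | GenOp e0 e1 e2 e4 Af n f}
  proj_mem := GenOp.proj
  comp_mem f g hf hg := GenOp.comp f g hf hg

lemma mem_GenOp {n : ℕ} {t : (Fin (n + 1) → X) → X}
    (ht : t ∈ (CClone e0 e1 e2 e4 Af).carrier n) : GenOp e0 e1 e2 e4 Af n t := by
  have h : CClone e0 e1 e2 e4 Af ≤ GenClone e0 e1 e2 e4 Af := by
    apply sInf_le
    intro k f hf
    rcases hf with hf | hf
    · cases k with
      | zero =>
        obtain ⟨p, -, rfl⟩ := hf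
        exact GenOp.phi p
      | succ k => exact absurd hf (Set.notMem_empty f)
    · cases k with
      | zero => exact absurd hf (Set.notMem_empty f)
      | succ k => cases k with
        | zero => exact absurd hf (Set.notMem_empty f)
        | succ k => cases k with
          | zero =>
            obtain ⟨p, q1, q2, hle, rfl⟩ := hf
            exact GenOp.mgen p q1 q2 hle
          | succ k => exact absurd hf (Set.notMem_empty f)
  exact h n ht

/-- Composition of an `(n+1)`-ary operation with a family of unary functions. -/
def cmpU {n : ℕ} (t : (Fin (n + 1) → X) → X) (u : Fin (n + 1) → X → X) : X → X :=
  fun a => t fun i => u i a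

/-- Classification predicate: identity, a `φ`, or distracted. -/
def K0 (v : X → X) : Prop :=
  v = id ∨ (∃ p : P, v = phi e0 e1 e2 e4 Af p) ∨
    ∃ a ∈ Aset e0 e1 e2 e4, v a = e2 ∨ v a = e4

/-- Conclusion predicate: identity or a `φ`. -/
def L01 (v : X → X) : Prop :=
  v = id ∨ ∃ p : P, v = phi e0 e1 e2 e4 Af p

/-- If `f` takes different values on `c` and `d`, then `f` depends on some coordinate
where `c` and `d` differ. -/
lemma hybrid_aux {m : ℕ} (f : (Fin m → X) → X) :
    ∀ (k : ℕ) (c d : Fin m → X),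
      (Finset.univ.filter fun l => c l ≠ d l).card ≤ k →
      f c ≠ f d → ∃ l, c l ≠ d l ∧ DependsOnVar f l := by
  intro k
  induction k with
  | zero =>
    intro c d hcard hne
    exfalso
    apply hne
    have hcd : c = d := funext fun l => by
      by_contra h
      have hl : l ∈ Finset.univ.filter fun l => c l ≠ d l := by simp [h]
      have := Finset.card_pos.mpr ⟨l, hl⟩
      omega
    rw [hcd]
  | succ k ih =>
    intro c d hcard hne
    have hex : ∃ l₀, c l₀ ≠ d l₀ := by
      by_contra h
      push_neg at h
      exact hne (by rw [funext h])
    obtain ⟨l₀, hl₀⟩ := hex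
    by_cases hstep : f c ≠ f (Function.update c l₀ (d l₀))
    · exact ⟨l₀, hl₀, c, Function.update c l₀ (d l₀),
        fun j hj => (Function.update_of_ne hj _ _).symm, hstep⟩
    · push_neg at hstep
      have hne' : f (Function.update c l₀ (d l₀)) ≠ f d := by rw [← hstep]; exact hne
      have hsub : (Finset.univ.filter fun l => Function.update c l₀ (d l₀) l ≠ d l)
          ⊆ (Finset.univ.filter fun l => c l ≠ d l).erase l₀ := by
        intro j hj
        simp only [Finset.mem_filter, Finset.mem_univ, true_and] at hj
        have hjl : j ≠ l₀ := by
          rintro rfl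
          exact hj (Function.update_self _ _ _)
        refine Finset.mem_erase.mpr ⟨hjl, ?_⟩
        simp only [Finset.mem_filter, Finset.mem_univ, true_and]
        rwa [Function.update_of_ne hjl] at hj
      have hcard' : (Finset.univ.filter
          fun l => Function.update c l₀ (d l₀) l ≠ d l).card ≤ k := by
        have h1 := Finset.card_le_card hsub
        have h2 : ((Finset.univ.filter fun l => c l ≠ d l).erase l₀).card
            = (Finset.univ.filter fun l => c l ≠ d l).card - 1 :=
          Finset.card_erase_of_mem (by simp [hl₀])
        omega
      obtain ⟨l, hl, hdep⟩ := ih _ _ hcard' hne'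
      have hjl : l ≠ l₀ := by
        rintro rfl
        exact hl (Function.update_self _ _ _)
      rw [Function.update_of_ne hjl] at hl
      exact ⟨l, hl, hdep⟩

lemma hybrid {m : ℕ} (f : (Fin m → X) → X) (c d : Fin m → X) (hne : f c ≠ f d) :
    ∃ l, c l ≠ d l ∧ DependsOnVar f l :=
  hybrid_aux f _ c d le_rfl hne

end Auxiliary

/-- Remark: if `t ∈ C` is unspoilt, witnessed by unary members `ts` of `C` with
`t(ts 0, …, ts n) ∈ Φ`, and `t` depends on its `i`-th variable, then `ts i ∈ Φ ∪ {id}`. -/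
theorem unspoilt_witness_in_Phi_or_id
    {X : Type u} {P : Type v} [Infinite X] [SemilatticeSup P]
    (e0 e1 e2 e4 : X)
    (hdist : e0 ≠ e1 ∧ e0 ≠ e2 ∧ e0 ≠ e4 ∧ e1 ≠ e2 ∧ e1 ≠ e4 ∧ e2 ≠ e4)
    (hcard : Cardinal.lift.{u} (Cardinal.mk P) ≤ Cardinal.lift.{v} (2 ^ Cardinal.mk X))
    (Af : P → Set X) (hAf : ∀ p : P, Af p ⊆ Aset e0 e1 e2 e4)
    (hcover : ∀ (p : P) (k : ℕ) (q : Fin k → P),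
      (∀ i, p ≠ q i) → ¬ Af p ⊆ ⋃ i, Af (q i))
    (n : ℕ) (t : (Fin (n + 1) → X) → X)
    (ht : t ∈ (CClone e0 e1 e2 e4 Af).carrier n)
    (ts : Fin (n + 1) → (Fin 1 → X) → X)
    (hts : ∀ i, ts i ∈ (CClone e0 e1 e2 e4 Af).carrier 0)
    (hcomp : (fun x : Fin 1 → X => t fun i => ts i x) ∈ PhiFam e0 e1 e2 e4 Af Set.univ 0)
    (i : Fin (n + 1)) (hdep : DependsOnVar t i) :
    ts i = (fun x => x 0) ∨ ∃ p : P, ts i = phi1 e0 e1 e2 e4 Af p := by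
  classical
  obtain ⟨h01, h02, h04, h12, h14, h24⟩ := hdist
  -- Basic facts about `Aset`
  have hmemA : ∀ y : X, y ∈ Aset e0 e1 e2 e4 ↔ ¬(y = e0 ∨ y = e1 ∨ y = e2 ∨ y = e4) := by
    intro y
    simp only [Aset, Set.mem_compl_iff, Set.mem_insert_iff, Set.mem_singleton_iff]
  have hnotA : ∀ y : X, (y = e0 ∨ y = e1 ∨ y = e2 ∨ y = e4) → y ∉ Aset e0 e1 e2 e4 :=
    fun y hy hy' => (hmemA y).mp hy' hy
  have hA : (Aset e0 e1 e2 e4).Nonempty := by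
    have hfin : ({e0, e1, e2, e4} : Set X).Finite := Set.toFinite _
    exact hfin.infinite_compl.nonempty
  -- Basic facts about `phi`
  have phival : ∀ (p : P) (x : X),
      (x ∈ Af p ∧ phi e0 e1 e2 e4 Af p x = e1) ∨
      (x ∉ Af p ∧ x ∈ Aset e0 e1 e2 e4 ∧ phi e0 e1 e2 e4 Af p x = e0) ∨
      (x ∉ Aset e0 e1 e2 e4 ∧ x = e2 ∧ phi e0 e1 e2 e4 Af p x = e2) ∨
      (x ∉ Aset e0 e1 e2 e4 ∧ x ≠ e2 ∧ phi e0 e1 e2 e4 Af p x = e4) := by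
    intro p x
    unfold phi
    split_ifs with h1 h2 h3
    · exact Or.inl ⟨h1, rfl⟩
    · exact Or.inr (Or.inl ⟨h1, h2, rfl⟩)
    · exact Or.inr (Or.inr (Or.inl ⟨h2, h3, rfl⟩))
    · exact Or.inr (Or.inr (Or.inr ⟨h2, h3, rfl⟩))
  have phi_A : ∀ (p : P) (x : X), x ∈ Aset e0 e1 e2 e4 →
      phi e0 e1 e2 e4 Af p x = e0 ∨ phi e0 e1 e2 e4 Af p x = e1 := by
    intro p x hx
    rcases phival p x with ⟨_, h⟩ | ⟨_, _, h⟩ | ⟨hx', _, _⟩ | ⟨hx', _, _⟩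
    · exact Or.inr h
    · exact Or.inl h
    · exact absurd hx hx'
    · exact absurd hx hx'
  have phi_nA : ∀ (p : P) (x : X), x ∉ Aset e0 e1 e2 e4 →
      (x = e2 ∧ phi e0 e1 e2 e4 Af p x = e2) ∨ (x ≠ e2 ∧ phi e0 e1 e2 e4 Af p x = e4) := by
    intro p x hx
    rcases phival p x with ⟨h1, _⟩ | ⟨_, h2, _⟩ | ⟨_, h2, h3⟩ | ⟨_, h2, h3⟩
    · exact absurd (hAf p h1) hx
    · exact absurd h2 hx
    · exact Or.inl ⟨h2, h3⟩
    · exact Or.inr ⟨h2, h3⟩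
  have phi_nA_eq : ∀ (p q : P) (x : X), x ∉ Aset e0 e1 e2 e4 →
      phi e0 e1 e2 e4 Af p x = phi e0 e1 e2 e4 Af q x := by
    intro p q x hx
    rcases phi_nA p x hx with ⟨h1, h2⟩ | ⟨h1, h2⟩ <;>
      rcases phi_nA q x hx with ⟨h1', h2'⟩ | ⟨h1', h2'⟩
    · rw [h2, h2']
    · exact absurd h1 h1'
    · exact absurd h1' h1
    · rw [h2, h2']
  have phi_mem01 : ∀ (p : P) (x : X),
      phi e0 e1 e2 e4 Af p x = e0 ∨ phi e0 e1 e2 e4 Af p x = e1 →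
      x ∈ Aset e0 e1 e2 e4 := by
    intro p x h
    by_contra hx
    rcases phi_nA p x hx with ⟨_, h2⟩ | ⟨_, h2⟩ <;> rw [h2] at h
    · rcases h with h | h
      · exact h02 h.symm
      · exact h12 h.symm
    · rcases h with h | h
      · exact h04 h.symm
      · exact h14 h.symm
  have phi_on24 : ∀ (p : P) (x : X), x = e2 ∨ x = e4 →
      phi e0 e1 e2 e4 Af p x = e2 ∨ phi e0 e1 e2 e4 Af p x = e4 := by
    intro p x hx
    have hx' : x ∉ Aset e0 e1 e2 e4 := hnotA x (by tauto)
    rcases phi_nA p x hx' with ⟨_, h2⟩ | ⟨_, h2⟩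
    · exact Or.inl h2
    · exact Or.inr h2
  have phi_on01 : ∀ (p : P) (x : X), x = e0 ∨ x = e1 →
      phi e0 e1 e2 e4 Af p x = e4 := by
    intro p x hx
    have hx' : x ∉ Aset e0 e1 e2 e4 := hnotA x (by tauto)
    rcases phi_nA p x hx' with ⟨h1, _⟩ | ⟨_, h2⟩
    · rcases hx with h | h
      · exact absurd (h.symm.trans h1) h02
      · exact absurd (h.symm.trans h1) h12
    · exact h2
  have phi_range : ∀ (p : P) (x : X),
      phi e0 e1 e2 e4 Af p x = e0 ∨ phi e0 e1 e2 e4 Af p x = e1 ∨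
      phi e0 e1 e2 e4 Af p x = e2 ∨ phi e0 e1 e2 e4 Af p x = e4 := by
    intro p x
    rcases phival p x with ⟨_, h⟩ | ⟨_, _, h⟩ | ⟨_, _, h⟩ | ⟨_, _, h⟩ <;> tauto
  -- Basic facts about `mOp`
  have mval : ∀ (p q1 q2 : P) (x y z : X),
      (y = phi e0 e1 e2 e4 Af q1 x ∧ z = phi e0 e1 e2 e4 Af q2 x ∧
        mOp e0 e1 e2 e4 Af p q1 q2 x y z = phi e0 e1 e2 e4 Af p x) ∨
      (¬(y = phi e0 e1 e2 e4 Af q1 x ∧ z = phi e0 e1 e2 e4 Af q2 x) ∧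
        (mOp e0 e1 e2 e4 Af p q1 q2 x y z = e2 ∨
         mOp e0 e1 e2 e4 Af p q1 q2 x y z = e4)) := by
    intro p q1 q2 x y z
    unfold mOp
    split_ifs with hc1 hc2
    · exact Or.inl ⟨hc1.1, hc1.2, rfl⟩
    · exact Or.inr ⟨hc1, Or.inl rfl⟩
    · exact Or.inr ⟨hc1, Or.inr rfl⟩
  have m_pos : ∀ (p q1 q2 : P) (x y z : X),
      y = phi e0 e1 e2 e4 Af q1 x → z = phi e0 e1 e2 e4 Af q2 x →
      mOp e0 e1 e2 e4 Af p q1 q2 x y z = phi e0 e1 e2 e4 Af p x := by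
    intro p q1 q2 x y z h1 h2
    rcases mval p q1 q2 x y z with ⟨_, _, h⟩ | ⟨hc, _⟩
    · exact h
    · exact absurd ⟨h1, h2⟩ hc
  have m24a : ∀ (p q1 q2 : P) (x y z : X),
      ¬(y = phi e0 e1 e2 e4 Af q1 x ∧ z = phi e0 e1 e2 e4 Af q2 x) →
      mOp e0 e1 e2 e4 Af p q1 q2 x y z = e2 ∨ mOp e0 e1 e2 e4 Af p q1 q2 x y z = e4 := by
    intro p q1 q2 x y z hc
    rcases mval p q1 q2 x y z with ⟨h1, h2, _⟩ | ⟨_, h⟩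
    · exact absurd ⟨h1, h2⟩ hc
    · exact h
  have m24b : ∀ (p q1 q2 : P) (x y z : X), x ∉ Aset e0 e1 e2 e4 →
      mOp e0 e1 e2 e4 Af p q1 q2 x y z = e2 ∨ mOp e0 e1 e2 e4 Af p q1 q2 x y z = e4 := by
    intro p q1 q2 x y z hx
    rcases mval p q1 q2 x y z with ⟨_, _, h⟩ | ⟨_, h⟩
    · rw [h]
      rcases phi_nA p x hx with ⟨_, h2⟩ | ⟨_, h2⟩
      · exact Or.inl h2
      · exact Or.inr h2
    · exact h
  have m_range : ∀ (p q1 q2 : P) (x y z : X),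
      mOp e0 e1 e2 e4 Af p q1 q2 x y z = e0 ∨ mOp e0 e1 e2 e4 Af p q1 q2 x y z = e1 ∨
      mOp e0 e1 e2 e4 Af p q1 q2 x y z = e2 ∨ mOp e0 e1 e2 e4 Af p q1 q2 x y z = e4 := by
    intro p q1 q2 x y z
    rcases mval p q1 q2 x y z with ⟨_, _, h⟩ | ⟨_, h⟩
    · rw [h]; exact phi_range p x
    · tauto
  -- The classification lemma: substituting classified unary functions into a member
  -- of `C` yields a classified unary function.
  have hK : ∀ {k : ℕ} {s : (Fin (k + 1) → X) → X}, GenOp e0 e1 e2 e4 Af k s →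
      ∀ u : Fin (k + 1) → X → X, (∀ j, K0 e0 e1 e2 e4 Af (u j)) →
      K0 e0 e1 e2 e4 Af (cmpU s u) := by
    intro k s hGen
    induction hGen with
    | proj k j =>
      intro u hu
      exact hu j
    | phi p =>
      intro u hu
      rcases hu 0 with h | ⟨q, h⟩ | ⟨a, ha, h⟩
      · refine Or.inr (Or.inl ⟨p, funext fun a => ?_⟩)
        show phi e0 e1 e2 e4 Af p (u 0 a) = phi e0 e1 e2 e4 Af p a
        rw [h]; rfl
      · obtain ⟨a, ha⟩ := hA
        refine Or.inr (Or.inr ⟨a, ha, ?_⟩)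
        show phi e0 e1 e2 e4 Af p (u 0 a) = e2 ∨ phi e0 e1 e2 e4 Af p (u 0 a) = e4
        rw [h]
        exact Or.inr (phi_on01 p _ (phi_A q a ha))
      · refine Or.inr (Or.inr ⟨a, ha, ?_⟩)
        show phi e0 e1 e2 e4 Af p (u 0 a) = e2 ∨ phi e0 e1 e2 e4 Af p (u 0 a) = e4
        exact phi_on24 p _ h
    | mgen p q1 q2 hle =>
      intro u hu
      rcases hu 0 with h0 | ⟨r0, h0⟩ | ⟨a, ha, h0⟩
      · -- u 0 = id
        rcases hu 1 with h1 | ⟨r1, h1⟩ | ⟨a, ha, h1⟩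
        · -- u 1 = id: distracted
          obtain ⟨a, ha⟩ := hA
          refine Or.inr (Or.inr ⟨a, ha, ?_⟩)
          show mOp e0 e1 e2 e4 Af p q1 q2 (u 0 a) (u 1 a) (u 2 a) = e2 ∨ mOp e0 e1 e2 e4 Af p q1 q2 (u 0 a) (u 1 a) (u 2 a) = e4
          refine m24a p q1 q2 _ _ _ fun hc => ?_
          have : a ∈ Aset e0 e1 e2 e4 → False := by
            rw [h0, h1] at hc
            have := hc.1
            intro haA
            rcases phi_A q1 (id a) (by simpa using haA) with hq | hq <;>
              rw [hq] at this <;> simp only [id] at this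
            · exact hnotA a (Or.inl this) haA
            · exact hnotA a (Or.inr (Or.inl this)) haA
          exact this ha
        · -- u 1 = phi r1
          rcases hu 2 with h2 | ⟨r2, h2⟩ | ⟨a, ha, h2⟩
          · -- u 2 = id : distracted
            obtain ⟨a, ha⟩ := hA
            refine Or.inr (Or.inr ⟨a, ha, ?_⟩)
            show mOp e0 e1 e2 e4 Af p q1 q2 (u 0 a) (u 1 a) (u 2 a) = e2 ∨ mOp e0 e1 e2 e4 Af p q1 q2 (u 0 a) (u 1 a) (u 2 a) = e4
            refine m24a p q1 q2 _ _ _ fun hc => ?_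
            rw [h0, h2] at hc
            have := hc.2
            simp only [id] at this
            rcases phi_A q2 a ha with hq | hq <;> rw [hq] at this
            · exact hnotA a (Or.inl this) ha
            · exact hnotA a (Or.inr (Or.inl this)) ha
          · -- u 2 = phi r2 : main case
            by_cases hag : ∀ a ∈ Aset e0 e1 e2 e4,
                phi e0 e1 e2 e4 Af r1 a = phi e0 e1 e2 e4 Af q1 a ∧
                phi e0 e1 e2 e4 Af r2 a = phi e0 e1 e2 e4 Af q2 a
            · refine Or.inr (Or.inl ⟨p, funext fun x => ?_⟩)
              show mOp e0 e1 e2 e4 Af p q1 q2 (u 0 x) (u 1 x) (u 2 x)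
                  = phi e0 e1 e2 e4 Af p x
              rw [h0, h1, h2]
              simp only [id]
              by_cases hx : x ∈ Aset e0 e1 e2 e4
              · exact m_pos p q1 q2 _ _ _ (hag x hx).1 (hag x hx).2
              · exact m_pos p q1 q2 _ _ _ (phi_nA_eq r1 q1 x hx) (phi_nA_eq r2 q2 x hx)
            · push_neg at hag
              obtain ⟨a, ha, hne⟩ := hag
              refine Or.inr (Or.inr ⟨a, ha, ?_⟩)
              show mOp e0 e1 e2 e4 Af p q1 q2 (u 0 a) (u 1 a) (u 2 a) = e2 ∨ mOp e0 e1 e2 e4 Af p q1 q2 (u 0 a) (u 1 a) (u 2 a) = e4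
              rw [h0, h1, h2]
              simp only [id]
              refine m24a p q1 q2 _ _ _ fun hc => ?_
              exact hne hc.1 hc.2
          · -- u 2 distracted
            refine Or.inr (Or.inr ⟨a, ha, ?_⟩)
            show mOp e0 e1 e2 e4 Af p q1 q2 (u 0 a) (u 1 a) (u 2 a) = e2 ∨ mOp e0 e1 e2 e4 Af p q1 q2 (u 0 a) (u 1 a) (u 2 a) = e4
            refine m24a p q1 q2 _ _ _ fun hc => ?_
            have := hc.2
            rw [h0] at hc
            have h2' := hc.2
            rcases phi_A q2 (id a) (by simpa using ha) with hq | hq <;>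
              rw [hq] at h2' <;> rcases h2 with h | h <;> rw [h] at h2'
            · exact h02 (h2'.symm)
            · exact h04 (h2'.symm)
            · exact h12 (h2'.symm)
            · exact h14 (h2'.symm)
        · -- u 1 distracted
          refine Or.inr (Or.inr ⟨a, ha, ?_⟩)
          show mOp e0 e1 e2 e4 Af p q1 q2 (u 0 a) (u 1 a) (u 2 a) = e2 ∨ mOp e0 e1 e2 e4 Af p q1 q2 (u 0 a) (u 1 a) (u 2 a) = e4
          refine m24a p q1 q2 _ _ _ fun hc => ?_
          rw [h0] at hc
          have h1' := hc.1
          rcases phi_A q1 (id a) (by simpa using ha) with hq | hq <;>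
            rw [hq] at h1' <;> rcases h1 with h | h <;> rw [h] at h1'
          · exact h02 (h1'.symm)
          · exact h04 (h1'.symm)
          · exact h12 (h1'.symm)
          · exact h14 (h1'.symm)
      · -- u 0 = phi r0
        obtain ⟨a, ha⟩ := hA
        refine Or.inr (Or.inr ⟨a, ha, ?_⟩)
        show mOp e0 e1 e2 e4 Af p q1 q2 (u 0 a) (u 1 a) (u 2 a) = e2 ∨ mOp e0 e1 e2 e4 Af p q1 q2 (u 0 a) (u 1 a) (u 2 a) = e4
        refine m24b p q1 q2 _ _ _ ?_
        rw [h0]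
        exact hnotA _ (by rcases phi_A r0 a ha with h | h <;> tauto)
      · -- u 0 distracted
        refine Or.inr (Or.inr ⟨a, ha, ?_⟩)
        show mOp e0 e1 e2 e4 Af p q1 q2 (u 0 a) (u 1 a) (u 2 a) = e2 ∨ mOp e0 e1 e2 e4 Af p q1 q2 (u 0 a) (u 1 a) (u 2 a) = e4
        exact m24b p q1 q2 _ _ _ (hnotA _ (by tauto))
    | comp f g hf hg ihf ihg =>
      intro u hu
      exact ihf (fun l => cmpU (g l) u) (fun l => ihg l u hu)
  -- The main lemma.
  have hL : ∀ {k : ℕ} {s : (Fin (k + 1) → X) → X}, GenOp e0 e1 e2 e4 Af k s →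
      ∀ u : Fin (k + 1) → X → X, (∀ j, K0 e0 e1 e2 e4 Af (u j)) →
      L01 e0 e1 e2 e4 Af (cmpU s u) →
      ∀ j, DependsOnVar s j → L01 e0 e1 e2 e4 Af (u j) := by
    intro k s hGen
    induction hGen with
    | proj k j' =>
      intro u hu hc j hdep
      have hjj : j = j' := by
        by_contra hne
        obtain ⟨a, b, hab, hval⟩ := hdep
        exact hval (hab j' fun h => hne h.symm)
      subst hjj
      exact hc
    | phi p =>
      intro u hu hc j _
      have hj0 : j = 0 := Subsingleton.elim (α := Fin 1) j 0
      subst hj0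
      rcases hu 0 with h | ⟨q, h⟩ | ⟨a, ha, h⟩
      · exact Or.inl h
      · exfalso
        obtain ⟨a, ha⟩ := hA
        have hval : cmpU (phi1 e0 e1 e2 e4 Af p) u a = e4 := by
          show phi e0 e1 e2 e4 Af p (u 0 a) = e4
          rw [h]
          exact phi_on01 p _ (phi_A q a ha)
        rcases hc with hc | ⟨r, hc⟩
        · rw [hc] at hval
          exact hnotA a (Or.inr (Or.inr (Or.inr hval))) ha
        · rw [hc] at hval
          rcases phi_A r a ha with hq | hq <;> rw [hq] at hval
          · exact h04 hval
          · exact h14 hval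
      · exfalso
        have hval : cmpU (phi1 e0 e1 e2 e4 Af p) u a = e2 ∨
            cmpU (phi1 e0 e1 e2 e4 Af p) u a = e4 := by
          show phi e0 e1 e2 e4 Af p (u 0 a) = e2 ∨ phi e0 e1 e2 e4 Af p (u 0 a) = e4
          exact phi_on24 p _ h
        rcases hc with hc | ⟨r, hc⟩
        · rw [hc] at hval
          exact hnotA a (by tauto) ha
        · rw [hc] at hval
          rcases phi_A r a ha with hq | hq <;> rw [hq] at hval <;>
            rcases hval with h' | h'
          · exact h02 h'
          · exact h04 h'
          · exact h12 h'
          · exact h14 h'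
    | mgen p q1 q2 hle =>
      intro u hu hc j _
      rcases hc with hc | ⟨r, hc⟩
      · exfalso
        obtain ⟨a, ha⟩ := hA
        have hval : mOp e0 e1 e2 e4 Af p q1 q2 (u 0 a) (u 1 a) (u 2 a) = a :=
          congrFun hc a
        have := m_range p q1 q2 (u 0 a) (u 1 a) (u 2 a)
        rw [hval] at this
        exact hnotA a this ha
      · -- composite is `phi r`; analyse on `A`
        have hbranch : ∀ a ∈ Aset e0 e1 e2 e4,
            u 1 a = phi e0 e1 e2 e4 Af q1 (u 0 a) ∧
            u 2 a = phi e0 e1 e2 e4 Af q2 (u 0 a) ∧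
            phi e0 e1 e2 e4 Af p (u 0 a) = phi e0 e1 e2 e4 Af r a := by
          intro a ha
          have hval : mOp e0 e1 e2 e4 Af p q1 q2 (u 0 a) (u 1 a) (u 2 a)
              = phi e0 e1 e2 e4 Af r a := congrFun hc a
          have hr01 := phi_A r a ha
          rcases mval p q1 q2 (u 0 a) (u 1 a) (u 2 a) with ⟨hh1, hh2, hh3⟩ | ⟨_, hh⟩
          · exact ⟨hh1, hh2, hh3.symm.trans hval⟩
          · exfalso
            rcases hh with hh | hh <;> rw [hh] at hval <;>
              rcases hr01 with hq | hq <;> rw [hq] at hval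
            · exact h02 hval.symm
            · exact h12 hval.symm
            · exact h04 hval.symm
            · exact h14 hval.symm
        have hu0A : ∀ a ∈ Aset e0 e1 e2 e4, u 0 a ∈ Aset e0 e1 e2 e4 := by
          intro a ha
          apply phi_mem01 p
          rw [(hbranch a ha).2.2]
          exact phi_A r a ha
        have h0 : u 0 = id := by
          rcases hu 0 with h | ⟨q, h⟩ | ⟨a, ha, h⟩
          · exact h
          · exfalso
            obtain ⟨a, ha⟩ := hA
            have := hu0A a ha
            rw [h] at this
            exact (hmemA _).mp this (by rcases phi_A q a ha with h' | h' <;> tauto)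
          · exfalso
            have := hu0A a ha
            exact (hmemA _).mp this (by tauto)
        have hb1 : ∀ a ∈ Aset e0 e1 e2 e4, u 1 a = phi e0 e1 e2 e4 Af q1 a := by
          intro a ha
          have := (hbranch a ha).1
          rw [h0] at this
          simpa using this
        have hb2 : ∀ a ∈ Aset e0 e1 e2 e4, u 2 a = phi e0 e1 e2 e4 Af q2 a := by
          intro a ha
          have := (hbranch a ha).2.1
          rw [h0] at this
          simpa using this
        have h1 : ∃ r1, u 1 = phi e0 e1 e2 e4 Af r1 := by
          rcases hu 1 with h | ⟨q, h⟩ | ⟨a, ha, h⟩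
          · exfalso
            obtain ⟨a, ha⟩ := hA
            have := hb1 a ha
            rw [h] at this
            simp only [id] at this
            exact (hmemA a).mp ha
              (by rcases phi_A q1 a ha with h' | h' <;> rw [h'] at this <;> tauto)
          · exact ⟨q, h⟩
          · exfalso
            have := hb1 a ha
            rcases phi_A q1 a ha with h' | h' <;> rw [h'] at this <;>
              rcases h with h'' | h'' <;> rw [h''] at this
            · exact h02 this.symm
            · exact h04 this.symm
            · exact h12 this.symm
            · exact h14 this.symm
        have h2 : ∃ r2, u 2 = phi e0 e1 e2 e4 Af r2 := by
          rcases hu 2 with h | ⟨q, h⟩ | ⟨a, ha, h⟩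
          · exfalso
            obtain ⟨a, ha⟩ := hA
            have := hb2 a ha
            rw [h] at this
            simp only [id] at this
            exact (hmemA a).mp ha
              (by rcases phi_A q2 a ha with h' | h' <;> rw [h'] at this <;> tauto)
          · exact ⟨q, h⟩
          · exfalso
            have := hb2 a ha
            rcases phi_A q2 a ha with h' | h' <;> rw [h'] at this <;>
              rcases h with h'' | h'' <;> rw [h''] at this
            · exact h02 this.symm
            · exact h04 this.symm
            · exact h12 this.symm
            · exact h14 this.symm
        have hall : ∀ j' : Fin 3, L01 e0 e1 e2 e4 Af (u j') := by
          intro j'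
          fin_cases j'
          · exact Or.inl h0
          · exact Or.inr h1
          · exact Or.inr h2
        exact hall j
    | comp f g hf hg ihf ihg =>
      intro u hu hc j hdep
      obtain ⟨a, b, hab, hne⟩ := hdep
      obtain ⟨l, hlne, hldep⟩ := hybrid f (fun l => g l a) (fun l => g l b) hne
      have hgdep : DependsOnVar (g l) j := ⟨a, b, hab, hlne⟩
      have hw : ∀ l', K0 e0 e1 e2 e4 Af (cmpU (g l') u) := fun l' => hK (hg l') u hu
      have hfl : L01 e0 e1 e2 e4 Af (cmpU (g l) u) :=
        ihf (fun l' => cmpU (g l') u) hw hc l hldep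
      exact ihg l u hu hfl j hgdep
  -- Put everything together.
  set u : Fin (n + 1) → X → X := fun j a => ts j (fun _ => a) with hu_def
  have hKu : ∀ j, K0 e0 e1 e2 e4 Af (u j) := by
    intro j
    have := hK (mem_GenOp e0 e1 e2 e4 Af (hts j)) (fun _ => id) (fun _ => Or.inl rfl)
    exact this
  obtain ⟨p, -, hp⟩ := hcomp
  have hc : cmpU t u = phi e0 e1 e2 e4 Af p := by
    funext a
    have := congrFun hp (fun _ => a)
    exact this
  have hfin2 := hL (mem_GenOp e0 e1 e2 e4 Af ht) u hKu (Or.inr ⟨p, hc⟩) i hdep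
  have heta : ∀ x : Fin 1 → X, ts i x = u i (x 0) := by
    intro x
    show ts i x = ts i (fun _ => x 0)
    congr 1
    funext j
    rw [Subsingleton.elim j 0]
  rcases hfin2 with h | ⟨q, h⟩
  · left
    funext x
    rw [heta x, h]
    rfl
  · right
    exact ⟨q, funext fun x => by rw [heta x, h]; rfl⟩
end
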